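/- Let W ∈ ℝ^{r×d} and h ∈ ℝ^r be such that the uncertainty set U = {P : W·vec(P) ≤ h} of payoff matrices is nonempty, take risk levels ε_i = 1 for every player i, and let 𝓕 = {Q : Q is a Borel probability measure on ℝ^d with finite first moment and W·(∫ p dQ(p)) ≤ h}. Then x ∈ S is a distributionally robust optimization equilibrium if and only if x is a robust optimization equilibrium of the robust game with uncertainty set U. -/

import Mathlib

open MeasureTheory Matrix

namespace DRG

/-- A payoff matrix: assigns to each player `i` and each joint action a real payoff. -/
abbrev Payoff (N : ℕ) (a : Fin N → ℕ) : Type := Fin N → (∀ k : Fin N, Fin (a k)) → ℝ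

/-- A (not necessarily feasible) strategy profile. -/
abbrev Strategy (N : ℕ) (a : Fin N → ℕ) : Type := ∀ k : Fin N, Fin (a k) → ℝ

/-- Index type for the vectorization of a payoff matrix. -/
abbrev Idx (N : ℕ) (a : Fin N → ℕ) : Type := Fin N × (∀ k : Fin N, Fin (a k))

/-- Vectorization of a payoff matrix. -/
def vecP {N : ℕ} {a : Fin N → ℕ} (P : Payoff N a) : Idx N a → ℝ := fun q => P q.1 q.2

/-- The mixed-strategy simplex `S_n`. -/
def simplex (n : ℕ) : Set (Fin n → ℝ) := {x | (∀ j, 0 ≤ x j) ∧ ∑ j, x j = 1}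

/-- The set `S` of mixed strategy profiles. -/
def profiles (N : ℕ) (a : Fin N → ℕ) : Set (Strategy N a) :=
  {x | ∀ i, x i ∈ simplex (a i)}

/-- Expected payoff `π_i(P;x)`. -/
noncomputable def pay {N : ℕ} {a : Fin N → ℕ} (P : Payoff N a) (i : Fin N)
    (x : Strategy N a) : ℝ :=
  ∑ j : (∀ k : Fin N, Fin (a k)), P i j * ∏ k, x k (j k)

/-- Nash equilibrium of the complete information game with payoff matrix `P`. -/
def IsNashEq {N : ℕ} {a : Fin N → ℕ} (P : Payoff N a) (x : Strategy N a) : Prop :=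
  x ∈ profiles N a ∧ ∀ i : Fin N, ∀ u ∈ simplex (a i),
    pay P i (Function.update x i u) ≤ pay P i x

/-- Robust optimization equilibrium for uncertainty set `U`. -/
def IsRobustEq {N : ℕ} {a : Fin N → ℕ} (U : Set (Payoff N a)) (x : Strategy N a) : Prop :=
  x ∈ profiles N a ∧ ∀ i : Fin N, ∀ u ∈ simplex (a i),
    (⨅ P : U, pay (P : Payoff N a) i (Function.update x i u)) ≤
      ⨅ P : U, pay (P : Payoff N a) i x

/-- Conditional value at risk of the loss `L` at level `ε` under `Q`. -/
noncomputable def cvar {V : Type*} [MeasurableSpace V] (Q : Measure V) (ε : ℝ)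
    (L : V → ℝ) : ℝ :=
  ⨅ ζ : ℝ, (ζ + (1 / ε) * ∫ p, max (L p - ζ) 0 ∂Q)

/-- Distributionally robust optimization equilibrium for ambiguity set `𝓕` and
risk levels `ε`. -/
def IsDREq {N : ℕ} {a : Fin N → ℕ} (𝓕 : Set (Measure (Payoff N a))) (ε : Fin N → ℝ)
    (x : Strategy N a) : Prop :=
  x ∈ profiles N a ∧ ∀ i : Fin N, ∀ u ∈ simplex (a i),
    (⨆ Q : 𝓕, cvar (Q : Measure (Payoff N a)) (ε i) (fun P => - pay P i x)) ≤
      ⨆ Q : 𝓕, cvar (Q : Measure (Payoff N a)) (ε i)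
        (fun P => - pay P i (Function.update x i u))

/-- The ambiguity set `𝓕(W,h,m,s)`. -/
def ambiguity {N : ℕ} {a : Fin N → ℕ} (r : ℕ) (W : Matrix (Fin r) (Idx N a) ℝ)
    (h : Fin r → ℝ) (m : Idx N a → ℝ) (s : ℝ) : Set (Measure (Payoff N a)) :=
  {Q | IsProbabilityMeasure Q ∧ Integrable (fun p => p) Q ∧
    Q {P | ∀ t, (W *ᵥ vecP P) t ≤ h t} = 1 ∧
    vecP (∫ p, p ∂Q) = m ∧
    (∫ p, ∑ q, |vecP p q - m q| ∂Q) ≤ s}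

/-- The matrix `Y^i(x^{-i})` satisfying `vec(P)ᵀ Y^i(x^{-i}) uⁱ = π_i(P;(x^{-i},uⁱ))`. -/
noncomputable def Ymat {N : ℕ} {a : Fin N → ℕ} (i : Fin N) (x : Strategy N a) :
    Matrix (Idx N a) (Fin (a i)) ℝ :=
  Matrix.of fun q l =>
    if q.1 = i ∧ q.2 i = l then ∏ r ∈ Finset.univ.erase i, x r (q.2 r) else 0

open Filter Topology

/-- CVaR at level 1 of an integrable loss under a probability measure is the expectation. -/
lemma cvar_one_eq {V : Type*} [MeasurableSpace V] (Q : Measure V) [IsProbabilityMeasure Q]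
    (L : V → ℝ) (hL : Integrable L Q) :
    (⨅ ζ : ℝ, (ζ + (1 / (1:ℝ)) * ∫ p, max (L p - ζ) 0 ∂Q)) = ∫ p, L p ∂Q := by
  set I := ∫ p, L p ∂Q with hI
  have hsub : ∀ ζ : ℝ, Integrable (fun p => L p - ζ) Q := fun ζ => hL.sub (integrable_const ζ)
  have hpos : ∀ ζ : ℝ, Integrable (fun p => max (L p - ζ) 0) Q := fun ζ => (hsub ζ).pos_part
  have hpos2 : ∀ ζ : ℝ, Integrable (fun p => max (ζ - L p) 0) Q := fun ζ => by
    simpa using ((integrable_const ζ).sub hL).pos_part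
  have hlow : ∀ ζ : ℝ, I ≤ ζ + (1 / (1:ℝ)) * ∫ p, max (L p - ζ) 0 ∂Q := by
    intro ζ
    have h1 : ∫ p, (L p - ζ) ∂Q ≤ ∫ p, max (L p - ζ) 0 ∂Q :=
      integral_mono (hsub ζ) (hpos ζ) fun p => le_max_left _ _
    have h2 : ∫ p, (L p - ζ) ∂Q = I - ζ := by
      rw [integral_sub hL (integrable_const ζ), integral_const]
      simp [hI]
    rw [h2] at h1; simp only [one_div, inv_one, one_mul]; linarith
  have hbdd : BddBelow (Set.range fun ζ : ℝ => ζ + (1 / (1:ℝ)) * ∫ p, max (L p - ζ) 0 ∂Q) :=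
    ⟨I, by rintro _ ⟨ζ, rfl⟩; exact hlow ζ⟩
  refine le_antisymm ?_ (le_ciInf hlow)
  -- show the function tends to I at -∞
  have hg : Tendsto (fun ζ : ℝ => ∫ p, max (ζ - L p) 0 ∂Q) atBot (𝓝 0) := by
    have hg' : Tendsto (fun ζ : ℝ => ∫ p, max (ζ - L p) 0 ∂Q) atBot
        (𝓝 (∫ p, (fun _ : V => (0:ℝ)) p ∂Q)) := by
      apply tendsto_integral_filter_of_dominated_convergence (fun p => |L p|)
      · exact Eventually.of_forall fun ζ => (hpos2 ζ).aestronglyMeasurable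
      · filter_upwards [eventually_le_atBot (0:ℝ)] with ζ hζ
        refine Eventually.of_forall fun p => ?_
        rw [Real.norm_eq_abs, abs_of_nonneg (le_max_right _ _)]
        rcases le_total (ζ - L p) 0 with hc | hc
        · rw [max_eq_right hc]; positivity
        · rw [max_eq_left hc]
          have : -L p ≤ |L p| := neg_le_abs _
          linarith
      · exact hL.abs
      · refine Eventually.of_forall fun p => ?_
        have : (fun ζ : ℝ => max (ζ - L p) 0) =ᶠ[atBot] fun _ => (0:ℝ) := by
          filter_upwards [eventually_le_atBot (L p)] with ζ hζ
          exact max_eq_right (by linarith)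
        exact Tendsto.congr' this.symm tendsto_const_nhds
    simpa using hg'
  have hfg : ∀ ζ : ℝ, ζ + (1 / (1:ℝ)) * ∫ p, max (L p - ζ) 0 ∂Q
      = I + ∫ p, max (ζ - L p) 0 ∂Q := by
    intro ζ
    have hmax : ∀ p, max (L p - ζ) 0 = (L p - ζ) + max (ζ - L p) 0 := by
      intro p
      rcases le_total (L p - ζ) 0 with hc | hc
      · rw [max_eq_right hc, max_eq_left (by linarith)]; ring
      · rw [max_eq_left hc, max_eq_right (by linarith)]; ring
    have : ∫ p, max (L p - ζ) 0 ∂Q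
        = (∫ p, (L p - ζ) ∂Q) + ∫ p, max (ζ - L p) 0 ∂Q := by
      rw [← integral_add (hsub ζ) (hpos2 ζ)]
      exact integral_congr_ae (Eventually.of_forall fun p => hmax p)
    rw [this, integral_sub hL (integrable_const ζ), integral_const]
    simp [hI]; ring
  have htend : Tendsto (fun ζ : ℝ => ζ + (1 / (1:ℝ)) * ∫ p, max (L p - ζ) 0 ∂Q)
      atBot (𝓝 I) := by
    have := (tendsto_const_nhds (x := I) (f := atBot (α := ℝ))).add hg
    rw [add_zero] at this
    exact this.congr fun ζ => (hfg ζ).symm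
  exact ge_of_tendsto htend (Eventually.of_forall fun ζ => ciInf_le hbdd ζ)


variable {N : ℕ} {a : Fin N → ℕ}

/-- Evaluation of a payoff matrix at a coordinate, as a continuous linear map. -/
noncomputable def coordCLM (i : Fin N) (j : ∀ k : Fin N, Fin (a k)) :
    Payoff N a →L[ℝ] ℝ :=
  (ContinuousLinearMap.proj j : ((∀ k : Fin N, Fin (a k)) → ℝ) →L[ℝ] ℝ).comp
    (ContinuousLinearMap.proj i : Payoff N a →L[ℝ] ((∀ k : Fin N, Fin (a k)) → ℝ))

lemma coordCLM_apply (i : Fin N) (j : ∀ k : Fin N, Fin (a k)) (P : Payoff N a) :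
    coordCLM i j P = P i j := rfl

lemma pay_integrable (Q : Measure (Payoff N a)) (hQ : Integrable (fun p => p) Q)
    (i : Fin N) (y : Strategy N a) :
    Integrable (fun P : Payoff N a => pay P i y) Q := by
  have hco : ∀ j : ∀ k : Fin N, Fin (a k),
      Integrable (fun P : Payoff N a => P i j * ∏ k, y k (j k)) Q :=
    fun j => ((coordCLM i j).integrable_comp hQ).mul_const _
  unfold pay
  exact integrable_finset_sum _ fun j _ => hco j

lemma pay_integral (Q : Measure (Payoff N a)) (hQ : Integrable (fun p => p) Q)
    (i : Fin N) (y : Strategy N a) :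
    ∫ P, pay P i y ∂Q = pay (∫ p, p ∂Q) i y := by
  have hco : ∀ j : ∀ k : Fin N, Fin (a k),
      Integrable (fun P : Payoff N a => P i j * ∏ k, y k (j k)) Q :=
    fun j => ((coordCLM i j).integrable_comp hQ).mul_const _
  unfold pay
  rw [integral_finset_sum _ fun j _ => hco j]
  refine Finset.sum_congr rfl fun j _ => ?_
  rw [integral_mul_const]
  congr 1
  exact ((coordCLM i j).integral_comp_comm hQ)

/-- Key identity: the sup of CVaR (at level 1) over the ambiguity set equals minus
the robust inf over the uncertainty set. -/
lemma sup_cvar_eq {r : ℕ} (W : Matrix (Fin r) (Idx N a) ℝ) (h : Fin r → ℝ)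
    (i : Fin N) (y : Strategy N a) :
    (⨆ Q : {Q : Measure (Payoff N a) | IsProbabilityMeasure Q ∧
        Integrable (fun p => p) Q ∧ ∀ t, (W *ᵥ vecP (∫ p, p ∂Q)) t ≤ h t},
      cvar (Q : Measure (Payoff N a)) 1 (fun P => - pay P i y)) =
    - ⨅ P : {P : Payoff N a | ∀ t, (W *ᵥ vecP P) t ≤ h t}, pay (P : Payoff N a) i y := by
  set F := {Q : Measure (Payoff N a) | IsProbabilityMeasure Q ∧
        Integrable (fun p => p) Q ∧ ∀ t, (W *ᵥ vecP (∫ p, p ∂Q)) t ≤ h t} with hF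
  set U := {P : Payoff N a | ∀ t, (W *ᵥ vecP P) t ≤ h t} with hU
  have hrange : Set.range (fun Q : F => cvar (Q : Measure (Payoff N a)) 1
        (fun P => - pay P i y))
      = -(Set.range fun P : U => pay (P : Payoff N a) i y) := by
    ext z
    constructor
    · rintro ⟨⟨Q, hQprob, hQint, hQmean⟩, rfl⟩
      have : IsProbabilityMeasure Q := hQprob
      have hL : Integrable (fun P : Payoff N a => - pay P i y) Q :=
        (pay_integrable Q hQint i y).neg
      have hc : cvar Q 1 (fun P => - pay P i y) = - pay (∫ p, p ∂Q) i y := by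
        rw [cvar, cvar_one_eq Q _ hL, integral_neg, pay_integral Q hQint i y]
      rw [Set.mem_neg]
      refine ⟨⟨∫ p, p ∂Q, hQmean⟩, ?_⟩
      show pay (∫ p, p ∂Q) i y = -(cvar Q 1 fun P => -pay P i y)
      rw [hc, neg_neg]
    · rintro hz
      rw [Set.mem_neg] at hz
      obtain ⟨⟨P, hP⟩, hPz⟩ := hz
      refine ⟨⟨Measure.dirac P, ?_, ?_, ?_⟩, ?_⟩
      · infer_instance
      · refine (integrable_const P).congr ?_
        rw [ae_dirac_eq]
        exact Filter.eventually_pure.mpr rfl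
      · rw [integral_dirac]; exact hP
      · have : IsProbabilityMeasure (Measure.dirac P) := inferInstance
        have hL : Integrable (fun P' : Payoff N a => - pay P' i y) (Measure.dirac P) := by
          refine (integrable_const (- pay P i y)).congr ?_
          rw [ae_dirac_eq]
          exact Filter.eventually_pure.mpr rfl
        show cvar (Measure.dirac P) 1 (fun P' => - pay P' i y) = z
        rw [cvar, cvar_one_eq _ _ hL, integral_dirac]
        have hPz' : pay P i y = -z := hPz
        rw [hPz', neg_neg]
  rw [iSup, hrange, iInf, Real.sInf_def, neg_neg]


/-- **Distributionally robust games generalize robust games.**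
With risk levels `ε_i = 1` for every player and ambiguity set consisting of all
Borel probability measures with finite first moment whose mean lies in the
nonempty uncertainty set `U = {P : W·vec(P) ≤ h}`, a profile `x ∈ S` is a
distributionally robust optimization equilibrium iff it is a robust
optimization equilibrium of the robust game with uncertainty set `U`. -/
theorem drEq_iff_robustEq_of_meanInU {N r : ℕ} (hN : 1 ≤ N)
    (a : Fin N → ℕ) (ha : ∀ i, 1 ≤ a i)
    (W : Matrix (Fin r) (Idx N a) ℝ) (h : Fin r → ℝ)
    (hne : {P : Payoff N a | ∀ t, (W *ᵥ vecP P) t ≤ h t}.Nonempty)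
    (x : Strategy N a) :
    IsDREq {Q : Measure (Payoff N a) | IsProbabilityMeasure Q ∧
        Integrable (fun p => p) Q ∧ ∀ t, (W *ᵥ vecP (∫ p, p ∂Q)) t ≤ h t}
      (fun _ => 1) x ↔
      IsRobustEq {P : Payoff N a | ∀ t, (W *ᵥ vecP P) t ≤ h t} x := by
  unfold IsDREq IsRobustEq
  refine and_congr_right fun _ => ?_
  refine forall_congr' fun i => forall_congr' fun u => forall_congr' fun hu => ?_
  rw [sup_cvar_eq W h i x, sup_cvar_eq W h i (Function.update x i u), neg_le_neg_iff]

end DRG
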